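/- If R and S are injective partial functional relations on X, then the injective union R ⊔¹ S := (R ⊔ S) ∩ ((R⁻¹ ⊔ S⁻¹))⁻¹ is an injective partial functional relation on X, where ⊔ denotes preferential union and ⁻¹ denotes relational converse. -/
import Mathlib


def IsPFun {α : Type*} (R : Set (α × α)) : Prop :=
  ∀ x y z : α, (x, y) ∈ R → (x, z) ∈ R → y = z

def relComp {α : Type*} (R S : Set (α × α)) : Set (α × α) :=
  {p | ∃ y, (p.1, y) ∈ R ∧ (y, p.2) ∈ S}

def antidom {α : Type*} (R : Set (α × α)) : Set (α × α) :=
  {p | p.1 = p.2 ∧ ¬ ∃ y, (p.1, y) ∈ R}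

def prefUnion {α : Type*} (R S : Set (α × α)) : Set (α × α) :=
  R ∪ {p | p ∈ S ∧ ¬ ∃ z, (p.1, z) ∈ R}

def conv {α : Type*} (R : Set (α × α)) : Set (α × α) :=
  {p | (p.2, p.1) ∈ R}

def injUnion {α : Type*} (R S : Set (α × α)) : Set (α × α) :=
  prefUnion R S ∩ conv (prefUnion (conv R) (conv S))

theorem stmt6 {α : Type*} (R S : Set (α × α))
    (hR : IsPFun R) (hR' : IsPFun (conv R)) (hS : IsPFun S) (hS' : IsPFun (conv S)) :
    IsPFun (injUnion R S) ∧ IsPFun (conv (injUnion R S)) := by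
  have key : ∀ (A B : Set (α × α)), IsPFun A → IsPFun B → IsPFun (prefUnion A B) := by
    intro A B hA hB x y z hy hz
    rcases hy with hy | ⟨hy, hny⟩ <;> rcases hz with hz | ⟨hz, hnz⟩
    · exact hA x y z hy hz
    · exact absurd ⟨y, hy⟩ hnz
    · exact absurd ⟨z, hz⟩ hny
    · exact hB x y z hy hz
  constructor
  · intro x y z hy hz
    exact key R S hR hS x y z hy.1 hz.1
  · intro x y z hy hz
    exact key (conv R) (conv S) hR' hS' x y z hy.2 hz.2
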